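/- Let X be a topological real vector space, C ⊆ X a convex set, and x₀ ∈ C. Then x₀ ∉ fri C if and only if there exist y ∈ C and a neighbourhood V of y such that for every z ∈ V ∩ C and every ε > 0, the point x₀ + ε(x₀ - z) does not belong to C. -/

import Mathlib

open Pointwise

/-- A face of a convex set `C`: a convex subset `F ⊆ C` such that whenever a point of `F`
lies in the open segment between two points of `C`, both endpoints belong to `F`. -/
def IsFace {X : Type*} [AddCommGroup X] [Module ℝ X] (C F : Set X) : Prop :=
  F ⊆ C ∧ Convex ℝ F ∧
    ∀ x ∈ F, ∀ y ∈ C, ∀ z ∈ C, x ∈ openSegment ℝ y z → y ∈ F ∧ z ∈ F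

/-- The minimal face of `C` containing `x`: the intersection of all faces containing `x`. -/
def minFace {X : Type*} [AddCommGroup X] [Module ℝ X] (C : Set X) (x : X) : Set X :=
  ⋂₀ {F | IsFace C F ∧ x ∈ F}

/-- The conic hull of a set. -/
def coneHull {X : Type*} [AddCommGroup X] [Module ℝ X] (S : Set X) : Set X :=
  {w | ∃ (a : ℝ) (s : X), 0 ≤ a ∧ s ∈ S ∧ w = a • s}

/-- The intrinsic core of a convex set. -/
def icr {X : Type*} [AddCommGroup X] [Module ℝ X] (C : Set X) : Set X :=
  {x ∈ C | ∀ y ∈ C, ∃ z ∈ C, x ∈ openSegment ℝ y z}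

/-- The face relative interior of a convex set in a topological vector space. -/
def fri {X : Type*} [AddCommGroup X] [Module ℝ X] [TopologicalSpace X] (C : Set X) : Set X :=
  {x ∈ C | C ⊆ closure (minFace C x)}

private lemma combo3 {X : Type*} [AddCommGroup X] [Module ℝ X] {C : Set X}
    (hC : Convex ℝ C) {x y z : X} {a b c : ℝ}
    (hx : x ∈ C) (hy : y ∈ C) (hz : z ∈ C)
    (ha : 0 ≤ a) (hb : 0 ≤ b) (hc : 0 ≤ c) (habc : a + b + c = 1) :
    a • x + b • y + c • z ∈ C := by
  rcases eq_or_lt_of_le (add_nonneg ha hb) with hd | hd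
  · have ha0 : a = 0 := by linarith
    have hb0 : b = 0 := by linarith
    have hc1 : c = 1 := by linarith
    simpa [ha0, hb0, hc1] using hz
  · have hu : (a / (a + b)) • x + (b / (a + b)) • y ∈ C :=
      hC hx hy (by positivity) (by positivity) (by field_simp)
    have h2 := hC hu hz (le_of_lt hd) hc (by linarith)
    convert h2 using 1
    match_scalars <;> field_simp

/-- characterisation of points outside the face relative interior. -/
theorem not_mem_fri_iff {X : Type*} [AddCommGroup X] [Module ℝ X] [TopologicalSpace X]
    [IsTopologicalAddGroup X] [ContinuousSMul ℝ X]
    (C : Set X) (hC : Convex ℝ C) (x₀ : X) (hx₀ : x₀ ∈ C) :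
    x₀ ∉ fri C ↔
      ∃ y ∈ C, ∃ V ∈ nhds y, ∀ z ∈ V ∩ C, ∀ ε : ℝ, 0 < ε → x₀ + ε • (x₀ - z) ∉ C := by
  classical
  set F : Set X := {z | z ∈ C ∧ ∃ ε : ℝ, 0 < ε ∧ x₀ + ε • (x₀ - z) ∈ C} with hFdef
  -- shrinking lemma
  have hshrink : ∀ z : X, ∀ ε ε' : ℝ, 0 < ε → ε ≤ ε' → x₀ + ε' • (x₀ - z) ∈ C →
      x₀ + ε • (x₀ - z) ∈ C := by
    intro z ε ε' hε hle hmem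
    have hε' : 0 < ε' := lt_of_lt_of_le hε hle
    have h := hC hx₀ hmem (a := 1 - ε / ε') (b := ε / ε')
      (by rw [sub_nonneg]; exact div_le_one_of_le₀ hle hε'.le) (by positivity) (by ring)
    convert h using 1
    match_scalars <;> field_simp <;> ring
  have hx₀F : x₀ ∈ F := ⟨hx₀, 1, one_pos, by simpa using hx₀⟩
  have hFC : F ⊆ C := fun z hz => hz.1
  have hFconv : Convex ℝ F := by
    intro z₁ hz₁ z₂ hz₂ a b ha hb hab
    obtain ⟨hz₁C, ε₁, hε₁, h₁⟩ := hz₁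
    obtain ⟨hz₂C, ε₂, hε₂, h₂⟩ := hz₂
    have hεm : 0 < min ε₁ ε₂ := lt_min hε₁ hε₂
    refine ⟨hC hz₁C hz₂C ha hb hab, min ε₁ ε₂, hεm, ?_⟩
    have k₁ := hshrink z₁ _ _ hεm (min_le_left _ _) h₁
    have k₂ := hshrink z₂ _ _ hεm (min_le_right _ _) h₂
    have h := hC k₁ k₂ ha hb hab
    have hb' : b = 1 - a := by linarith
    subst hb'
    convert h using 1
    module
  -- key step for the face property
  have hkey : ∀ y z : X, y ∈ C → z ∈ C → ∀ t s : ℝ, 0 < t → 0 < s → t + s = 1 →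
      (t • y + s • z) ∈ F → y ∈ F := by
    intro y z hyC hzC t s ht hs hts hx
    obtain ⟨-, ε, hε, hw⟩ := hx
    have h1ε : (0:ℝ) < 1 + ε := by linarith
    have hs1 : s ≤ 1 := by linarith
    set lam : ℝ := 1 / (2 * (1 + ε)) with hlam
    set mu : ℝ := ε * s / (2 * (1 + ε)) with hmu
    have hlam0 : 0 ≤ lam := by positivity
    have hmu0 : 0 ≤ mu := by positivity
    have hlm : lam + mu ≤ 1 := by
      rw [hlam, hmu, ← add_div, div_le_one (by positivity)]
      nlinarith
    have hnn : 0 ≤ 1 - lam - mu := by linarith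
    refine ⟨hyC, t * ε / (2 * (1 + ε)), by positivity, ?_⟩
    have hmem := combo3 hC hx₀ hw hzC hnn hlam0 hmu0 (by ring)
    have hs' : s = 1 - t := by linarith
    subst hs'
    convert hmem using 1
    rw [hlam, hmu]
    match_scalars <;> field_simp <;> ring
  have hFface : IsFace C F := by
    refine ⟨hFC, hFconv, ?_⟩
    rintro x hx y hyC z hzC ⟨a, b, ha, hb, hab, hxe⟩
    constructor
    · exact hkey y z hyC hzC a b ha hb hab (by rwa [hxe])
    · exact hkey z y hzC hyC b a hb ha (by linarith) (by rw [add_comm, hxe]; exact hx)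
  have hminF : minFace C x₀ = F := by
    apply subset_antisymm
    · exact Set.sInter_subset_of_mem ⟨hFface, hx₀F⟩
    · rintro w hw G ⟨hGface, hx₀G⟩
      obtain ⟨hwC, ε, hε, hmem⟩ := hw
      have h1ε : (0:ℝ) < 1 + ε := by linarith
      have hseg : x₀ ∈ openSegment ℝ w (x₀ + ε • (x₀ - w)) := by
        refine ⟨ε / (1 + ε), 1 / (1 + ε), by positivity, by positivity, ?_, ?_⟩
        · field_simp; ring
        · match_scalars <;> field_simp <;> ring
      exact (hGface.2.2 x₀ hx₀G w hwC _ hmem hseg).1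
  constructor
  · intro h
    have hns : ¬ C ⊆ closure (minFace C x₀) := fun hsub => h ⟨hx₀, hsub⟩
    obtain ⟨y, hyC, hycl⟩ := Set.not_subset.mp hns
    rw [hminF, mem_closure_iff] at hycl
    push_neg at hycl
    obtain ⟨V, hVopen, hyV, hVF⟩ := hycl
    refine ⟨y, hyC, V, hVopen.mem_nhds hyV, ?_⟩
    rintro z ⟨hzV, hzC⟩ ε hε hcon
    have hz : z ∈ V ∩ F := ⟨hzV, ⟨hzC, ε, hε, hcon⟩⟩
    rw [hVF] at hz
    exact hz
  · rintro ⟨y, hyC, V, hV, hcond⟩ ⟨-, hsub⟩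
    have hycl := hsub hyC
    rw [hminF, mem_closure_iff_nhds] at hycl
    obtain ⟨z, hzV, hzC, ε, hε, hmem⟩ := hycl V hV
    exact hcond z ⟨hzV, hzC⟩ ε hε hmem
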